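/- The symmetric simplicial complex construction is functorial: for every morphism of hypergraphs φ = (a, b) : H → H', the map S(φ) : S(H) → S(H') given by S(φ)({v}_v) = {a(v)}_{a(v)} and S(φ)(σ_e) = (a(σ))_{b(e)} if |a(σ)| ≥ 2, and S(φ)(σ_e) = {w}_w if a(σ) = {w} is a singleton, is well-defined (its values lie in S(H')), is monotone (x ≤ y in S(H) implies S(φ)(x) ≤ S(φ)(y) in S(H')), and satisfies dim(S(φ)(x)) ≤ dim(x) for all x; moreover S(id_H) = id_{S(H)} and S(ψ ∘ φ) = S(ψ) ∘ S(φ) for all composable hypergraph morphisms φ, ψ. -/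

import Mathlib

/-- A hypergraph `H = (V, E, f)`: finite vertex and edge sets together with a map assigning
to each hyperedge a nonempty set of vertices. -/
structure HGraph where
  V : Type
  E : Type
  [fintypeV : Fintype V]
  [fintypeE : Fintype E]
  [decEqV : DecidableEq V]
  [decEqE : DecidableEq E]
  f : E → Finset V
  nonempty : ∀ e, (f e).Nonempty

attribute [instance] HGraph.fintypeV HGraph.fintypeE
  HGraph.decEqV HGraph.decEqE

/-- The nested color domain of the hypergraph WL (HWL) test: a color at iteration `t+1` is
the previous color together with a multiset of previous colors of incident elements. -/
def HWLC : ℕ → Type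
  | 0 => Unit
  | t + 1 => HWLC t × Multiset (HWLC t)

/-- The HWL coloring of a hypergraph on the disjoint union `V ⊔ E`:
`d_{t+1}(v) = (d_t v, {{d_t e : v ∈ f e}})` and `d_{t+1}(e) = (d_t e, {{d_t v : v ∈ f e}})`. -/
noncomputable def hwl (H : HGraph) : (t : ℕ) → H.V ⊕ H.E → HWLC t
  | 0, _ => ()
  | t + 1, Sum.inl v =>
      (hwl H t (Sum.inl v),
       (Finset.univ.filter fun e => v ∈ H.f e).val.map fun e => hwl H t (Sum.inr e))
  | t + 1, Sum.inr e =>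
      (hwl H t (Sum.inr e), (H.f e).val.map fun v => hwl H t (Sum.inl v))

/-- The histogram of HWL colors over `V ⊔ E` at iteration `t`. -/
noncomputable def hwlHist (H : HGraph) (t : ℕ) : Multiset (HWLC t) :=
  Finset.univ.val.map (hwl H t)

/-- Two hypergraphs are HWL-equivalent if their HWL color histograms agree at every
iteration. -/
def HWLEquiv (H H' : HGraph) : Prop := ∀ t : ℕ, hwlHist H t = hwlHist H' t

/-- The strict order of the incidence poset `I(H)` on `V ⊔ E`: the only strict relations are
`v < e` for `v ∈ f e`. -/
def incLT (H : HGraph) : H.V ⊕ H.E → H.V ⊕ H.E → Prop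
  | Sum.inl v, Sum.inr e => v ∈ H.f e
  | _, _ => False

/-- The partial order of the incidence poset (the reflexive closure of `incLT`). -/
def incLE (H : HGraph) (x y : H.V ⊕ H.E) : Prop := x = y ∨ incLT H x y

/-- The dimension function of the incidence poset: `dim v = 0`, `dim e = 1`. -/
def incDim (H : HGraph) : H.V ⊕ H.E → ℕ
  | Sum.inl _ => 0
  | Sum.inr _ => 1

/-- The underlying set of the symmetric simplicial complex `S(H)`: pairs `({v}, v)` for
vertices `v` (written `{v}_v`) and pairs `(σ, e)` (written `σ_e`) with `σ ⊆ f e` of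
cardinality at least 2. -/
def SSC (H : HGraph) : Type :=
  {x : Finset H.V × (H.V ⊕ H.E) //
    (∃ v : H.V, x = ({v}, Sum.inl v)) ∨
    (∃ (σ : Finset H.V) (e : H.E), x = (σ, Sum.inr e) ∧ σ ⊆ H.f e ∧ 2 ≤ σ.card)}

noncomputable instance (H : HGraph) : Fintype (SSC H) := by
  classical
  unfold SSC
  exact Fintype.ofFinite _

/-- The strict order on `S(H)` : `{v}_v < σ_e` iff `v ∈ σ`, and `σ_e < τ_{e'}` iff `e = e'`
and `σ` is a proper subset of `τ`. -/
def sscLT (H : HGraph) (x y : SSC H) : Prop :=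
  (∃ (v : H.V) (σ : Finset H.V) (e : H.E),
      x.val = ({v}, Sum.inl v) ∧ y.val = (σ, Sum.inr e) ∧ v ∈ σ) ∨
  (∃ e : H.E, x.val.2 = Sum.inr e ∧ y.val.2 = Sum.inr e ∧ x.val.1 ⊂ y.val.1)

/-- The partial order on `S(H)` (the reflexive closure of `sscLT`). -/
def sscLE (H : HGraph) (x y : SSC H) : Prop := x = y ∨ sscLT H x y

/-- The dimension function on `S(H)`: `dim {v}_v = 0` and `dim σ_e = |σ| - 1`. -/
def sscDim {H : HGraph} (x : SSC H) : ℕ := x.val.1.card - 1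

/-- The map `S(φ) : S(H) → S(H')` induced by a hypergraph morphism `φ = (a, b)`:
`{v}_v ↦ {a v}_{a v}`; and `σ_e ↦ (a σ)_{b e}` if `|a σ| ≥ 2`, while `σ_e ↦ {w}_w` if
`a σ = {w}` is a singleton. -/
noncomputable def sscMap {H H' : HGraph} (a : H.V → H'.V) (b : H.E → H'.E)
    (hab : ∀ e : H.E, (H.f e).image a = H'.f (b e)) (x : SSC H) : SSC H' :=
  match hx : x.val.2 with
  | Sum.inl v => ⟨({a v}, Sum.inl (a v)), Or.inl ⟨a v, rfl⟩⟩
  | Sum.inr e =>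
    have key : x.val.1 ⊆ H.f e ∧ 2 ≤ x.val.1.card := by
      rcases x.property with ⟨v, hv⟩ | ⟨σ, e', hσ, hs, hc⟩
      · rw [hv] at hx; exact absurd hx (by simp)
      · have he : Sum.inr (α := H.V) e' = Sum.inr e := by rw [hσ] at hx; simpa using hx
        have he' : e' = e := by injection he
        have h1 : x.val.1 = σ := by rw [hσ]
        subst he'
        rw [h1]
        exact ⟨hs, hc⟩
    if h2 : 2 ≤ (x.val.1.image a).card then
      ⟨(x.val.1.image a, Sum.inr (b e)),
        Or.inr ⟨x.val.1.image a, b e, rfl, by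
          rw [← hab e]; exact Finset.image_subset_image key.1, h2⟩⟩
    else
      have hne : (x.val.1.image a).Nonempty :=
        Finset.image_nonempty.2 (Finset.card_pos.1 (by omega))
      ⟨({hne.choose}, Sum.inl hne.choose), Or.inl ⟨hne.choose, rfl⟩⟩

section Helpers
variable {H H' : HGraph} (a : H.V → H'.V) (b : H.E → H'.E)
  (hab : ∀ e : H.E, (H.f e).image a = H'.f (b e))

lemma sscMap_val_inl (x : SSC H) (v : H.V) (h : x.val.2 = Sum.inl v) :
    (sscMap a b hab x).val = ({a v}, Sum.inl (a v)) := by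
  unfold sscMap
  split
  · rename_i v' hx
    rw [h] at hx; injection hx with hv; rw [hv]
  · rename_i e hx
    rw [h] at hx; exact absurd hx (by simp)

lemma sscMap_val_inr_big (x : SSC H) (e : H.E) (h : x.val.2 = Sum.inr e)
    (h2 : 2 ≤ (x.val.1.image a).card) :
    (sscMap a b hab x).val = (x.val.1.image a, Sum.inr (b e)) := by
  unfold sscMap
  split
  · rename_i v' hx
    rw [h] at hx; exact absurd hx (by simp)
  · rename_i e' hx
    rw [h] at hx; injection hx with he; subst he
    dsimp only
    exact congrArg Subtype.val (dif_pos h2)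

lemma sscMap_val_inr_small (x : SSC H) (e : H.E) (w : H'.V) (h : x.val.2 = Sum.inr e)
    (hw : x.val.1.image a = {w}) :
    (sscMap a b hab x).val = ({w}, Sum.inl w) := by
  have hch : ∀ (s : Finset H'.V) (hne : s.Nonempty), s = {w} → hne.choose = w := by
    intro s hne hs
    subst hs
    simpa using hne.choose_spec
  unfold sscMap
  split
  · rename_i v' hx
    rw [h] at hx; exact absurd hx (by simp)
  · rename_i e' hx
    split_ifs with h2
    · rw [hw] at h2; simp at h2
    · refine (congrArg Subtype.val (dif_neg h2)).trans ?_
      dsimp only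
      rw [hch _ _ hw]

end Helpers

lemma SSC.val_fst_of_inl {H : HGraph} (x : SSC H) (v : H.V) (h : x.val.2 = Sum.inl v) :
    x.val.1 = {v} := by
  rcases x.property with ⟨v', hv⟩ | ⟨σ, e', hσ, _, _⟩
  · have : x.val = ({v'}, Sum.inl v') := hv
    rw [this] at h ⊢
    injection h with h; rw [h]
  · rw [hσ] at h; exact absurd h (by simp)

lemma SSC.edge_prop {H : HGraph} (x : SSC H) (e : H.E) (h : x.val.2 = Sum.inr e) :
    x.val.1 ⊆ H.f e ∧ 2 ≤ x.val.1.card := by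
  rcases x.property with ⟨v', hv⟩ | ⟨σ, e', hσ, hs, hc⟩
  · rw [hv] at h; exact absurd h (by simp)
  · rw [hσ] at h ⊢
    injection h with h; subst h
    exact ⟨hs, hc⟩

lemma sscMap_mono {H H' : HGraph} (a : H.V → H'.V) (b : H.E → H'.E)
    (hab : ∀ e : H.E, (H.f e).image a = H'.f (b e)) (x y : SSC H) (hxy : sscLE H x y) :
    sscLE H' (sscMap a b hab x) (sscMap a b hab y) := by
  rcases hxy with rfl | hlt
  · exact Or.inl rfl
  rcases hlt with ⟨v, σ, e, hx, hy, hv⟩ | ⟨e, hx2, hy2, hss⟩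
  · -- vertex below simplex
    have hx2 : x.val.2 = Sum.inl v := by rw [hx]
    have hy2 : y.val.2 = Sum.inr e := by rw [hy]
    have hy1 : y.val.1 = σ := by rw [hy]
    by_cases h2 : 2 ≤ (y.val.1.image a).card
    · refine Or.inr (Or.inl ⟨a v, y.val.1.image a, b e, sscMap_val_inl a b hab x v hx2,
        sscMap_val_inr_big a b hab y e hy2 h2, ?_⟩)
      rw [hy1]; exact Finset.mem_image_of_mem a hv
    · have hne : (y.val.1.image a).Nonempty := by
        rw [hy1]; exact Finset.image_nonempty.2 ⟨v, hv⟩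
      obtain ⟨w, hw⟩ := Finset.card_eq_one.1 (show (y.val.1.image a).card = 1 by
        have := Finset.card_pos.2 hne; omega)
      have hav : a v = w := by
        have : a v ∈ y.val.1.image a := by rw [hy1]; exact Finset.mem_image_of_mem a hv
        rw [hw] at this; simpa using this
      refine Or.inl (Subtype.ext ?_)
      rw [sscMap_val_inl a b hab x v hx2, sscMap_val_inr_small a b hab y e w hy2 hw, hav]
  · -- simplex below simplex
    have hxcard := (SSC.edge_prop x e hx2).2
    have hsub : x.val.1.image a ⊆ y.val.1.image a := Finset.image_subset_image hss.subset
    have hnex : (x.val.1.image a).Nonempty :=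
      Finset.image_nonempty.2 (Finset.card_pos.1 (by omega))
    by_cases h2 : 2 ≤ (y.val.1.image a).card
    · by_cases h1 : 2 ≤ (x.val.1.image a).card
      · by_cases heq : x.val.1.image a = y.val.1.image a
        · refine Or.inl (Subtype.ext ?_)
          rw [sscMap_val_inr_big a b hab x e hx2 h1,
            sscMap_val_inr_big a b hab y e hy2 h2, heq]
        · refine Or.inr (Or.inr ⟨b e, ?_, ?_, ?_⟩)
          · rw [sscMap_val_inr_big a b hab x e hx2 h1]
          · rw [sscMap_val_inr_big a b hab y e hy2 h2]
          · rw [sscMap_val_inr_big a b hab x e hx2 h1,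
              sscMap_val_inr_big a b hab y e hy2 h2]
            exact hsub.ssubset_of_ne heq
      · obtain ⟨w, hw⟩ := Finset.card_eq_one.1 (show (x.val.1.image a).card = 1 by
          have := Finset.card_pos.2 hnex; omega)
        refine Or.inr (Or.inl ⟨w, y.val.1.image a, b e,
          sscMap_val_inr_small a b hab x e w hx2 hw,
          sscMap_val_inr_big a b hab y e hy2 h2, ?_⟩)
        exact hsub (by rw [hw]; simp)
    · obtain ⟨w, hw⟩ := Finset.card_eq_one.1 (show (y.val.1.image a).card = 1 by
        have hney : (y.val.1.image a).Nonempty := hnex.mono hsub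
        have := Finset.card_pos.2 hney; omega)
      have hwx : x.val.1.image a = {w} := by
        rw [hw] at hsub
        exact (Finset.Nonempty.subset_singleton_iff hnex).mp hsub
      refine Or.inl (Subtype.ext ?_)
      rw [sscMap_val_inr_small a b hab x e w hx2 hwx,
        sscMap_val_inr_small a b hab y e w hy2 hw]

theorem symmetric_simplicial_complex_functorial' :
    (∀ (H H' : HGraph) (a : H.V → H'.V) (b : H.E → H'.E)
        (hab : ∀ e : H.E, (H.f e).image a = H'.f (b e)),
        (∀ (x : SSC H) (v : H.V), x.val = ({v}, Sum.inl v) →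
            (sscMap a b hab x).val = ({a v}, Sum.inl (a v))) ∧
        (∀ (x : SSC H) (σ : Finset H.V) (e : H.E), x.val = (σ, Sum.inr e) →
            2 ≤ (σ.image a).card →
            (sscMap a b hab x).val = (σ.image a, Sum.inr (b e))) ∧
        (∀ (x : SSC H) (σ : Finset H.V) (e : H.E) (w : H'.V), x.val = (σ, Sum.inr e) →
            σ.image a = {w} →
            (sscMap a b hab x).val = ({w}, Sum.inl w)) ∧
        (∀ x y : SSC H, sscLE H x y → sscLE H' (sscMap a b hab x) (sscMap a b hab y)) ∧
        (∀ x : SSC H, sscDim (sscMap a b hab x) ≤ sscDim x)) ∧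
    (∀ (H : HGraph) (hid : ∀ e : H.E, (H.f e).image id = H.f (id e)),
        sscMap id id hid = id) ∧
    (∀ (H H' H'' : HGraph) (a : H.V → H'.V) (b : H.E → H'.E)
        (a' : H'.V → H''.V) (b' : H'.E → H''.E)
        (hab : ∀ e : H.E, (H.f e).image a = H'.f (b e))
        (hab' : ∀ e : H'.E, (H'.f e).image a' = H''.f (b' e))
        (hcomp : ∀ e : H.E, (H.f e).image (a' ∘ a) = H''.f (b' (b e))),
        sscMap (a' ∘ a) (fun e => b' (b e)) hcomp = sscMap a' b' hab' ∘ sscMap a b hab) := by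
  refine ⟨fun H H' a b hab => ⟨?_, ?_, ?_, sscMap_mono a b hab, ?_⟩, ?_, ?_⟩
  · intro x v hx
    exact sscMap_val_inl a b hab x v (by rw [hx])
  · intro x σ e hx h2
    have h1 : x.val.1 = σ := by rw [hx]
    rw [sscMap_val_inr_big a b hab x e (by rw [hx]) (by rw [h1]; exact h2), h1]
  · intro x σ e w hx hw
    have h1 : x.val.1 = σ := by rw [hx]
    exact sscMap_val_inr_small a b hab x e w (by rw [hx]) (by rw [h1]; exact hw)
  · -- dimension
    intro x
    unfold sscDim
    match hx : x.val.2 with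
    | Sum.inl v =>
      rw [sscMap_val_inl a b hab x v hx]
      simp
    | Sum.inr e =>
      by_cases h2 : 2 ≤ (x.val.1.image a).card
      · rw [sscMap_val_inr_big a b hab x e hx h2]
        have := Finset.card_image_le (s := x.val.1) (f := a)
        simp only []
        omega
      · have hnex : (x.val.1.image a).Nonempty :=
          Finset.image_nonempty.2 (Finset.card_pos.1 (by
            have := (SSC.edge_prop x e hx).2; omega))
        obtain ⟨w, hw⟩ := Finset.card_eq_one.1 (show (x.val.1.image a).card = 1 by
          have := Finset.card_pos.2 hnex; omega)
        rw [sscMap_val_inr_small a b hab x e w hx hw]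
        simp
  · -- identity
    intro H hid
    funext x
    refine Subtype.ext ?_
    match hx : x.val.2 with
    | Sum.inl v =>
      rw [sscMap_val_inl id id hid x v hx]
      have := SSC.val_fst_of_inl x v hx
      simp only [id]
      exact Prod.ext this.symm hx.symm
    | Sum.inr e =>
      have hp := SSC.edge_prop x e hx
      rw [sscMap_val_inr_big id id hid x e hx (by rw [Finset.image_id]; exact hp.2)]
      simp only [id, Finset.image_id]
      exact Prod.ext rfl hx.symm
  · -- composition
    intro H H' H'' a b a' b' hab hab' hcomp
    funext x
    refine Subtype.ext ?_
    show (sscMap (a' ∘ a) _ hcomp x).val = (sscMap a' b' hab' (sscMap a b hab x)).val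
    match hx : x.val.2 with
    | Sum.inl v =>
      rw [sscMap_val_inl (a' ∘ a) _ hcomp x v hx]
      have h1 : (sscMap a b hab x).val = ({a v}, Sum.inl (a v)) :=
        sscMap_val_inl a b hab x v hx
      rw [sscMap_val_inl a' b' hab' _ (a v) (by rw [h1])]
      rfl
    | Sum.inr e =>
      have hp := SSC.edge_prop x e hx
      have himg : x.val.1.image (a' ∘ a) = (x.val.1.image a).image a' :=
        (Finset.image_image (g := a') (f := a)).symm
      by_cases h2 : 2 ≤ (x.val.1.image (a' ∘ a)).card
      · have h1 : 2 ≤ (x.val.1.image a).card := by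
          have h3 : (x.val.1.image (a' ∘ a)).card ≤ (x.val.1.image a).card := by
            rw [himg]; exact Finset.card_image_le
          omega
        have hinner : (sscMap a b hab x).val = (x.val.1.image a, Sum.inr (b e)) :=
          sscMap_val_inr_big a b hab x e hx h1
        rw [sscMap_val_inr_big (a' ∘ a) _ hcomp x e hx h2,
          sscMap_val_inr_big a' b' hab' _ (b e) (by rw [hinner]) (by rw [hinner]; rw [← himg]; exact h2)]
        rw [hinner, himg]
      · have hnex : (x.val.1.image (a' ∘ a)).Nonempty :=
          Finset.image_nonempty.2 (Finset.card_pos.1 (by have := hp.2; omega))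
        obtain ⟨w, hw⟩ := Finset.card_eq_one.1 (show (x.val.1.image (a' ∘ a)).card = 1 by
          have := Finset.card_pos.2 hnex; omega)
        rw [sscMap_val_inr_small (a' ∘ a) _ hcomp x e w hx hw]
        by_cases h1 : 2 ≤ (x.val.1.image a).card
        · have hinner : (sscMap a b hab x).val = (x.val.1.image a, Sum.inr (b e)) :=
            sscMap_val_inr_big a b hab x e hx h1
          rw [sscMap_val_inr_small a' b' hab' _ (b e) w (by rw [hinner])
            (by rw [hinner]; rw [← himg]; exact hw)]
        · have hnea : (x.val.1.image a).Nonempty :=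
            Finset.image_nonempty.2 (Finset.card_pos.1 (by have := hp.2; omega))
          obtain ⟨w', hw'⟩ := Finset.card_eq_one.1 (show (x.val.1.image a).card = 1 by
            have := Finset.card_pos.2 hnea; omega)
          have hinner : (sscMap a b hab x).val = ({w'}, Sum.inl w') :=
            sscMap_val_inr_small a b hab x e w' hx hw'
          rw [sscMap_val_inl a' b' hab' _ w' (by rw [hinner])]
          have : a' w' = w := by
            have h4 : (x.val.1.image a).image a' = {w} := by rw [← himg]; exact hw
            rw [hw'] at h4
            simpa using h4
          rw [this]

/-- The symmetric simplicial complex construction is functorial: for every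
hypergraph morphism `(a, b) : H → H'`, the induced map `S(φ)` takes the stated values
(well-definedness), is monotone, and decreases dimension; moreover it sends identities to
identities and compositions to compositions. -/
theorem symmetric_simplicial_complex_functorial :
    (∀ (H H' : HGraph) (a : H.V → H'.V) (b : H.E → H'.E)
        (hab : ∀ e : H.E, (H.f e).image a = H'.f (b e)),
        -- values on vertices
        (∀ (x : SSC H) (v : H.V), x.val = ({v}, Sum.inl v) →
            (sscMap a b hab x).val = ({a v}, Sum.inl (a v))) ∧
        -- values on simplices with non-degenerate image
        (∀ (x : SSC H) (σ : Finset H.V) (e : H.E), x.val = (σ, Sum.inr e) →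
            2 ≤ (σ.image a).card →
            (sscMap a b hab x).val = (σ.image a, Sum.inr (b e))) ∧
        -- values on simplices with singleton image
        (∀ (x : SSC H) (σ : Finset H.V) (e : H.E) (w : H'.V), x.val = (σ, Sum.inr e) →
            σ.image a = {w} →
            (sscMap a b hab x).val = ({w}, Sum.inl w)) ∧
        -- monotone
        (∀ x y : SSC H, sscLE H x y → sscLE H' (sscMap a b hab x) (sscMap a b hab y)) ∧
        -- dimension non-increasing
        (∀ x : SSC H, sscDim (sscMap a b hab x) ≤ sscDim x)) ∧
    -- identity
    (∀ (H : HGraph) (hid : ∀ e : H.E, (H.f e).image id = H.f (id e)),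
        sscMap id id hid = id) ∧
    -- composition
    (∀ (H H' H'' : HGraph) (a : H.V → H'.V) (b : H.E → H'.E)
        (a' : H'.V → H''.V) (b' : H'.E → H''.E)
        (hab : ∀ e : H.E, (H.f e).image a = H'.f (b e))
        (hab' : ∀ e : H'.E, (H'.f e).image a' = H''.f (b' e))
        (hcomp : ∀ e : H.E, (H.f e).image (a' ∘ a) = H''.f (b' (b e))),
        sscMap (a' ∘ a) (fun e => b' (b e)) hcomp = sscMap a' b' hab' ∘ sscMap a b hab) := by
  exact symmetric_simplicial_complex_functorial'
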